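/- For every κ > 0 and every x > 0 one has h(κx) = κ^(k+5/2) h_κ(x); that is, the change of variables η ↦ κη in the defining integral of h yields the rescaled relation p(r) = κ^(2+2a) p̄_κ(s) for the radial pressure. -/

import Mathlib

open Real MeasureTheory

theorem stmt_9
    (Φ : ℝ → ℝ) (hΦmeas : Measurable Φ) (hΦnn : ∀ η, 0 ≤ Φ η)
    (hΦneg : ∀ η < (0:ℝ), Φ η = 0)
    (C k δ C' a : ℝ) (hC : 0 < C) (hk0 : 0 < k) (hk1 : k < 3/2)
    (hδ0 : 0 < δ) (hδ1 : δ ≤ 1/2) (hC' : 0 < C') (ha : a = (k + 1/2)/2)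
    (hΦtaylor : ∀ η ∈ Set.Icc (0:ℝ) 1, |Φ η - C * η ^ k| ≤ C' * η ^ (k + δ))
    (h : ℝ → ℝ)
    (hh : ∀ y > (0:ℝ), h y = 4 * π / 3 * Real.exp y *
      ∫ η in (0:ℝ)..(1 - Real.exp (-y)),
        Φ η * (Real.exp (2*y)*(1-η)^2 - 1) ^ ((3:ℝ)/2))
    (hhneg : ∀ y ≤ (0:ℝ), h y = 0)
    (F : ℝ → ℝ → ℝ) (G : ℝ → ℝ → ℝ → ℝ) (Φκ : ℝ → ℝ → ℝ)
    (hF : ∀ κ > (0:ℝ), ∀ x, F κ x = (Real.exp (-(κ*x)) - 1 + κ*x) / κ^2)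
    (hG : ∀ κ x η, G κ x η = η^2 - F κ (2*x))
    (hΦκ : ∀ κ > (0:ℝ), ∀ η, Φκ κ η = κ ^ (-k) * Φ (κ*η))
    (hκfun : ℝ → ℝ → ℝ)
    (hhκ : ∀ κ > (0:ℝ), ∀ x > (0:ℝ), hκfun κ x =
      4 * π / 3 * Real.exp (4*κ*x) *
        ∫ η in (0:ℝ)..(x - κ * F κ x),
          Φκ κ η * (2*(x-η) + κ * G κ x η) ^ ((3:ℝ)/2))
    (hhκ0 : ∀ κ > (0:ℝ), ∀ x ≤ (0:ℝ), hκfun κ x = 0) :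
    ∀ κ > (0:ℝ), ∀ x > (0:ℝ), h (κ*x) = κ ^ (k + 5/2) * hκfun κ x := by
  intro κ hκ x hx
  have hκ0 : κ ≠ 0 := ne_of_gt hκ
  have hκx : 0 < κ * x := mul_pos hκ hx
  set E := Real.exp (-(κ*x)) with hE
  have hEpos : 0 < E := Real.exp_pos _
  have hE1 : E < 1 := by
    rw [hE]; exact Real.exp_lt_one_iff.mpr (by linarith)
  have hE2 : Real.exp (-(κ*(2*x))) = E^2 := by
    rw [hE, sq, ← Real.exp_add]; ring_nf
  have hEE : E^2 * Real.exp (2*(κ*x)) = 1 := by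
    rw [hE, sq, ← Real.exp_add, ← Real.exp_add, ← Real.exp_zero]; ring_nf
  have hup : x - κ * F κ x = (1 - E) / κ := by
    rw [hF κ hκ, hE]; field_simp; ring
  have hupos : 0 < x - κ * F κ x := by
    rw [hup]; exact div_pos (by linarith) hκ
  -- pointwise equality of integrands
  have key : Set.EqOn
      (fun η => Φκ κ η * (2*(x-η) + κ * G κ x η) ^ ((3:ℝ)/2))
      (fun η => (κ ^ (-k) * Real.exp (-(3*(κ*x))) / κ ^ ((3:ℝ)/2)) *
        (Φ (κ*η) * (Real.exp (2*(κ*x))*(1-κ*η)^2 - 1) ^ ((3:ℝ)/2)))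
      (Set.uIcc (0:ℝ) (x - κ * F κ x)) := by
    intro η hη
    rw [Set.uIcc_of_le hupos.le] at hη
    obtain ⟨hη0, hη1⟩ := hη
    have hle : κ * η ≤ 1 - E := by
      rw [hup] at hη1
      calc κ * η ≤ κ * ((1-E)/κ) := by
            exact mul_le_mul_of_nonneg_left hη1 hκ.le
        _ = 1 - E := by field_simp
    have hB : 0 ≤ Real.exp (2*(κ*x))*(1-κ*η)^2 - 1 := by
      have h1 : E ≤ 1 - κ*η := by linarith
      have h2 : E^2 ≤ (1-κ*η)^2 := by nlinarith
      have h3 : 0 < Real.exp (2*(κ*x)) := Real.exp_pos _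
      nlinarith
    have harg : 2*(x-η) + κ * G κ x η =
        E^2 * (Real.exp (2*(κ*x))*(1-κ*η)^2 - 1) / κ := by
      rw [hG, hF κ hκ, hE2]
      field_simp
      have hEE' : E^2 * Real.exp (2*x*κ) = 1 := by rw [← hEE, show 2*x*κ = 2*(κ*x) by ring]
      linear_combination (-(1-κ*η)^2) * hEE'
    have hE32 : (E^2) ^ ((3:ℝ)/2) = Real.exp (-(3*(κ*x))) := by
      rw [← hE2, ← Real.exp_mul]; ring_nf
    simp only [hΦκ κ hκ]
    rw [harg, Real.div_rpow (by positivity) hκ.le,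
      Real.mul_rpow (by positivity) hB, hE32]
    ring
  rw [hh (κ*x) hκx, hhκ κ hκ x hx, intervalIntegral.integral_congr key,
    intervalIntegral.integral_const_mul]
  -- change of variables
  have hcv : (∫ η in (0:ℝ)..(x - κ*F κ x),
        Φ (κ*η) * (Real.exp (2*(κ*x))*(1-κ*η)^2 - 1) ^ ((3:ℝ)/2))
      = κ⁻¹ * ∫ η in (0:ℝ)..(1 - E),
        Φ η * (Real.exp (2*(κ*x))*(1-η)^2 - 1) ^ ((3:ℝ)/2) := by
    have := intervalIntegral.integral_comp_mul_left (a := (0:ℝ))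
      (b := x - κ*F κ x)
      (fun t => Φ t * (Real.exp (2*(κ*x))*(1-t)^2 - 1) ^ ((3:ℝ)/2)) hκ0
    have hub : κ * (x - κ*F κ x) = 1 - E := by rw [hup]; field_simp
    rw [this, hub, mul_zero, smul_eq_mul]
  rw [hcv]
  have hpow : κ ^ (k + 5/2) * (κ ^ (-k) / κ ^ ((3:ℝ)/2)) * κ⁻¹ = 1 := by
    rw [← Real.rpow_neg_one κ, div_eq_mul_inv (κ ^ (-k)), ← Real.rpow_neg hκ.le,
      ← Real.rpow_add hκ, ← Real.rpow_add hκ, ← Real.rpow_add hκ]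
    rw [show k + 5/2 + (-k + -(3/2)) + -1 = (0:ℝ) by ring, Real.rpow_zero]
  have hexp : Real.exp (4*κ*x) * Real.exp (-(3*(κ*x))) = Real.exp (κ*x) := by
    rw [← Real.exp_add]; ring_nf
  calc 4 * π / 3 * Real.exp (κ*x) * ∫ η in (0:ℝ)..(1 - E),
        Φ η * (Real.exp (2*(κ*x))*(1-η)^2 - 1) ^ ((3:ℝ)/2)
      = (κ ^ (k + 5/2) * (κ ^ (-k) / κ ^ ((3:ℝ)/2)) * κ⁻¹) *
        (4 * π / 3) * (Real.exp (4*κ*x) * Real.exp (-(3*(κ*x)))) *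
        ∫ η in (0:ℝ)..(1 - E),
          Φ η * (Real.exp (2*(κ*x))*(1-η)^2 - 1) ^ ((3:ℝ)/2) := by
        rw [hpow, hexp]; ring
    _ = κ ^ (k + 5/2) * (4 * π / 3 * Real.exp (4*κ*x) *
        (κ ^ (-k) * Real.exp (-(3*(κ*x))) / κ ^ ((3:ℝ)/2) *
        (κ⁻¹ * ∫ η in (0:ℝ)..(1 - E),
          Φ η * (Real.exp (2*(κ*x))*(1-η)^2 - 1) ^ ((3:ℝ)/2)))) := by ring
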